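/- For a stratifiable Datalog¬ program P evaluated under stratified semantics on input I, the stable model semantics agrees: the stratified output P(I) is a stable model of P on I. -/

import Mathlib

/-- An atom: a relation name applied to a list of terms (variables or constants). -/
structure DAtom (Rel Var U : Type) where
  rel : Rel
  args : List (Var ⊕ U)

/-- A Datalog¬ rule: a head atom, positive body atoms, and negative body atoms. -/
structure DRule (Rel Var U : Type) where
  head : DAtom Rel Var U
  pos : List (DAtom Rel Var U)
  neg : List (DAtom Rel Var U)

/-- A fact: a relation name with a tuple of data values. -/
abbrev DFact (Rel U : Type) := Rel × List U

/-- The variables occurring in an atom. -/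
def atomVars {Rel Var U : Type} (a : DAtom Rel Var U) : Set Var :=
  {v | Sum.inl v ∈ a.args}

/-- Safety: every variable of the rule occurs in some positive body atom. -/
def DRule.safe {Rel Var U : Type} (r : DRule Rel Var U) : Prop :=
  ∀ v : Var, (v ∈ atomVars r.head ∨ ∃ a ∈ r.neg, v ∈ atomVars a) →
    ∃ a ∈ r.pos, v ∈ atomVars a

/-- Applying a valuation to an atom yields a fact. -/
def applyAtom {Rel Var U : Type} (V : Var → U) (a : DAtom Rel Var U) : DFact Rel U :=
  (a.rel, a.args.map (Sum.elim V id))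

/-- The immediate consequence operator `T_P`: adds all facts derived by satisfying
valuations of rules of `P` on `J`. -/
def Tstep {Rel Var U : Type} (P : Set (DRule Rel Var U)) (J : Set (DFact Rel U)) :
    Set (DFact Rel U) :=
  J ∪ {f | ∃ r ∈ P, ∃ V : Var → U,
    (∀ a ∈ r.pos, applyAtom V a ∈ J) ∧
    (∀ a ∈ r.neg, applyAtom V a ∉ J) ∧
    f = applyAtom V r.head}

/-- The output of `P` on `I`: the union of the iterates of `T_P` starting at `I`. -/
def fixpt {Rel Var U : Type} (P : Set (DRule Rel Var U)) (I : Set (DFact Rel U)) :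
    Set (DFact Rel U) :=
  ⋃ n : ℕ, (Tstep P)^[n] I

/-- The intensional relations of `P`: those appearing in rule heads. -/
def idbRels {Rel Var U : Type} (P : Set (DRule Rel Var U)) : Set Rel :=
  {R | ∃ r ∈ P, r.head.rel = R}

/-- A ground rule: all atoms are facts. -/
structure DGroundRule (Rel U : Type) where
  head : DFact Rel U
  pos : List (DFact Rel U)
  neg : List (DFact Rel U)

/-- The active domain of an instance: all data values occurring in its facts. -/
def adom {Rel U : Type} (I : Set (DFact Rel U)) : Set U :=
  {u | ∃ f ∈ I, u ∈ f.2}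

/-- The variables of a rule. -/
def ruleVars {Rel Var U : Type} (r : DRule Rel Var U) : Set Var :=
  atomVars r.head ∪ {v | ∃ a ∈ r.pos, v ∈ atomVars a} ∪ {v | ∃ a ∈ r.neg, v ∈ atomVars a}

/-- The constants appearing in the rules of `P`. -/
def consts {Rel Var U : Type} (P : Set (DRule Rel Var U)) : Set U :=
  {u | ∃ r ∈ P, ∃ a : DAtom Rel Var U,
    (a = r.head ∨ a ∈ r.pos ∨ a ∈ r.neg) ∧ Sum.inr u ∈ a.args}

/-- The ground program of `P` on `I`: all ground rules obtained by valuations whose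
image on the rule variables is contained in `adom I ∪ consts P`. -/
def groundProg {Rel Var U : Type} (P : Set (DRule Rel Var U)) (I : Set (DFact Rel U)) :
    Set (DGroundRule Rel U) :=
  {g | ∃ r ∈ P, ∃ V : Var → U,
    (∀ v ∈ ruleVars r, V v ∈ adom I ∪ consts P) ∧
    g = ⟨applyAtom V r.head, r.pos.map (applyAtom V), r.neg.map (applyAtom V)⟩}

/-- One step of the (positive) reduct of a ground program `G` with respect to `M`:
rules whose negative body intersects `M` are removed, and the remaining rules fire
on their positive bodies. -/
def TRed {Rel U : Type} (M : Set (DFact Rel U)) (G : Set (DGroundRule Rel U))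
    (J : Set (DFact Rel U)) : Set (DFact Rel U) :=
  J ∪ {f | ∃ g ∈ G, (∀ b ∈ g.neg, b ∉ M) ∧ (∀ b ∈ g.pos, b ∈ J) ∧ f = g.head}

/-- `M` is a stable model of `P` on input `I` if `M` equals the output of the
positive reduct of the ground program of `P` on `I`, applied to `I`. -/
def StableModel {Rel Var U : Type} (P : Set (DRule Rel Var U))
    (I M : Set (DFact Rel U)) : Prop :=
  M = ⋃ n : ℕ, (TRed M (groundProg P I))^[n] I

/-- The rules of `P` whose head relation has stratum number `i`. -/
def stratumProg {Rel Var U : Type} (P : Set (DRule Rel Var U)) (σ : Rel → ℕ)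
    (i : ℕ) : Set (DRule Rel Var U) :=
  {r ∈ P | σ r.head.rel = i}

/-- The stratified output after the first `k` strata: each stratum is evaluated by
the (semi-positive) fixpoint semantics on the output of the previous strata. -/
def stratOut {Rel Var U : Type} (P : Set (DRule Rel Var U)) (σ : Rel → ℕ) :
    ℕ → Set (DFact Rel U) → Set (DFact Rel U)
  | 0, I => I
  | k + 1, I => fixpt (stratumProg P σ (k + 1)) (stratOut P σ k I)

section AuxLemmas

variable {Rel Var U : Type}

lemma iter_chain {α : Type*} (f : Set α → Set α) (h : ∀ J, J ⊆ f J) (I : Set α) :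
    ∀ {a b : ℕ}, a ≤ b → f^[a] I ⊆ f^[b] I := by
  intro a b hab
  induction b with
  | zero => simp [Nat.le_zero.mp hab]
  | succ b ih =>
    rcases Nat.of_le_succ hab with h' | h'
    · refine (ih h').trans ?_
      rw [Function.iterate_succ_apply']
      exact h _
    · subst h'; exact subset_rfl

lemma list_common {α : Type*} (f : Set α → Set α) (h : ∀ J, J ⊆ f J) (I : Set α)
    (l : List α) (hl : ∀ b ∈ l, ∃ n, b ∈ f^[n] I) :
    ∃ N, ∀ b ∈ l, b ∈ f^[N] I := by
  induction l with
  | nil => exact ⟨0, by simp⟩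
  | cons x xs ih =>
    obtain ⟨N1, hN1⟩ := ih (fun b hb => hl b (List.mem_cons_of_mem _ hb))
    obtain ⟨N2, hN2⟩ := hl x (List.mem_cons_self)
    refine ⟨max N1 N2, fun b hb => ?_⟩
    rcases List.mem_cons.mp hb with rfl | hb
    · exact iter_chain f h I (le_max_right _ _) hN2
    · exact iter_chain f h I (le_max_left _ _) (hN1 b hb)

lemma subset_Tstep (Q : Set (DRule Rel Var U)) (J : Set (DFact Rel U)) :
    J ⊆ Tstep Q J := Set.subset_union_left

lemma iterate_subset_fixpt (Q : Set (DRule Rel Var U)) (B : Set (DFact Rel U)) (m : ℕ) :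
    (Tstep Q)^[m] B ⊆ fixpt Q B :=
  Set.subset_iUnion (fun k => (Tstep Q)^[k] B) m

lemma base_subset_fixpt (Q : Set (DRule Rel Var U)) (B : Set (DFact Rel U)) :
    B ⊆ fixpt Q B := iterate_subset_fixpt Q B 0

lemma stratOut_mono (P : Set (DRule Rel Var U)) (σ : Rel → ℕ) (I : Set (DFact Rel U))
    {k m : ℕ} (hkm : k ≤ m) : stratOut P σ k I ⊆ stratOut P σ m I := by
  induction m with
  | zero => rw [Nat.le_zero.mp hkm]
  | succ m ih =>
    rcases Nat.of_le_succ hkm with h' | h'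
    · exact (ih h').trans (base_subset_fixpt _ _)
    · subst h'; exact subset_rfl

lemma mem_fixpt_cases {Q : Set (DRule Rel Var U)} {B : Set (DFact Rel U)}
    {f : DFact Rel U} (hf : f ∈ fixpt Q B) :
    f ∈ B ∨ ∃ r ∈ Q, ∃ V : Var → U, f = applyAtom V r.head := by
  obtain ⟨m, hm⟩ := Set.mem_iUnion.mp hf
  clear hf
  induction m generalizing f with
  | zero => exact Or.inl hm
  | succ m ih =>
    rw [Function.iterate_succ_apply'] at hm
    rcases hm with hm | ⟨r, hr, V, _, _, rfl⟩
    · exact ih hm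
    · exact Or.inr ⟨r, hr, V, rfl⟩

lemma strata_mem (P : Set (DRule Rel Var U)) (σ : Rel → ℕ) (I : Set (DFact Rel U))
    (m : ℕ) (f : DFact Rel U) (hf : f ∈ stratOut P σ m I) :
    f ∈ I ∨ (f.1 ∈ idbRels P ∧ σ f.1 ≤ m ∧ f ∈ stratOut P σ (σ f.1) I) := by
  induction m with
  | zero => exact Or.inl hf
  | succ m ih =>
    rcases mem_fixpt_cases hf with hb | ⟨r, hrQ, V, rfl⟩
    · rcases ih hb with h | ⟨h1, h2, h3⟩
      · exact Or.inl h
      · exact Or.inr ⟨h1, h2.trans (Nat.le_succ m), h3⟩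
    · refine Or.inr ⟨⟨r, hrQ.1, rfl⟩, ?_, ?_⟩
      · show σ r.head.rel ≤ m + 1
        exact le_of_eq hrQ.2
      · show applyAtom V r.head ∈ stratOut P σ (σ r.head.rel) I
        rw [hrQ.2]; exact hf

lemma adom_stratOut (P : Set (DRule Rel Var U)) (σ : Rel → ℕ) (I : Set (DFact Rel U))
    (hsafe : ∀ r ∈ P, r.safe) (m : ℕ) :
    adom (stratOut P σ m I) ⊆ adom I ∪ consts P := by
  have key : ∀ (i : ℕ) (J : Set (DFact Rel U)), adom J ⊆ adom I ∪ consts P →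
      adom (Tstep (stratumProg P σ i) J) ⊆ adom I ∪ consts P := by
    intro i J hJ u hu
    obtain ⟨f, hf, huf⟩ := hu
    rcases hf with hf | ⟨r, hrQ, V, hpos, _, rfl⟩
    · exact hJ ⟨f, hf, huf⟩
    · obtain ⟨arg, harg, hargu⟩ := List.mem_map.mp huf
      rcases arg with v | c
      · -- variable: use safety
        obtain ⟨a, ha, hva⟩ := hsafe r hrQ.1 v (Or.inl harg)
        have hfa : applyAtom V a ∈ J := hpos a ha
        have : V v ∈ (applyAtom V a).2 := List.mem_map_of_mem hva
        have := hJ ⟨applyAtom V a, hfa, this⟩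
        simpa [← hargu] using this
      · refine Or.inr ⟨r, hrQ.1, r.head, Or.inl rfl, ?_⟩
        simp at hargu
        rw [hargu] at harg
        exact harg
  induction m with
  | zero => exact Set.subset_union_left
  | succ m ih =>
    intro u hu
    obtain ⟨f, hf, huf⟩ := hu
    obtain ⟨j, hj⟩ := Set.mem_iUnion.mp hf
    have : ∀ j : ℕ, adom ((Tstep (stratumProg P σ (m+1)))^[j] (stratOut P σ m I))
        ⊆ adom I ∪ consts P := by
      intro j
      induction j with
      | zero => exact ih
      | succ j ihj =>
        rw [Function.iterate_succ_apply']
        exact key _ _ ihj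
    exact this j ⟨f, hj, huf⟩

end AuxLemmas

/-- For a syntactically stratifiable safe Datalog¬ program, the stratified output is
a stable model of the program on the input. -/
theorem stmt19 {Rel Var U : Type} (P : Set (DRule Rel Var U)) (I : Set (DFact Rel U))
    (σ : Rel → ℕ) (n : ℕ)
    (hsafe : ∀ r ∈ P, r.safe)
    (hrange : ∀ r ∈ P, 1 ≤ σ r.head.rel ∧ σ r.head.rel ≤ n)
    (hposstrat : ∀ r ∈ P, ∀ a ∈ r.pos, a.rel ∈ idbRels P → σ a.rel ≤ σ r.head.rel)
    (hnegstrat : ∀ r ∈ P, ∀ a ∈ r.neg, a.rel ∈ idbRels P → σ a.rel < σ r.head.rel) :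
    StableModel P I (stratOut P σ n I) := by
  set M := stratOut P σ n I with hMdef
  set G := groundProg P I with hGdef
  have hsubTRed : ∀ J : Set (DFact Rel U), J ⊆ TRed M G J := fun _ => Set.subset_union_left
  -- Direction 1: every TRed iterate is contained in M
  have dir1 : ∀ m, (TRed M G)^[m] I ⊆ M := by
    intro m
    induction m with
    | zero => exact stratOut_mono P σ I (Nat.zero_le n)
    | succ m ih =>
      rw [Function.iterate_succ_apply']
      rintro f (hf | ⟨g, hgG, hnegM, hposJ, rfl⟩)
      · exact ih hf
      · obtain ⟨r, hrP, V, -, rfl⟩ := hgG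
        obtain ⟨h1, h2⟩ := hrange r hrP
        obtain ⟨j, hj⟩ : ∃ j, σ r.head.rel = j + 1 :=
          ⟨σ r.head.rel - 1, (Nat.succ_pred_eq_of_pos h1).symm⟩
        have hrQ : r ∈ stratumProg P σ (j + 1) := ⟨hrP, hj⟩
        have hfix : stratOut P σ (j + 1) I
            = fixpt (stratumProg P σ (j + 1)) (stratOut P σ j I) := rfl
        -- positive body facts are in stratOut (j+1)
        have hposM : ∀ a ∈ r.pos, applyAtom V a ∈ stratOut P σ (j + 1) I := by
          intro a ha
          have hmem : applyAtom V a ∈ M := ih (hposJ _ (List.mem_map_of_mem ha))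
          rcases strata_mem P σ I n _ hmem with hI | ⟨hidb, -, hmem'⟩
          · exact stratOut_mono P σ I (Nat.zero_le (j + 1)) hI
          · have hle : σ a.rel ≤ j + 1 := hj ▸ hposstrat r hrP a ha hidb
            exact stratOut_mono P σ I hle hmem'
        have hl : ∀ b ∈ r.pos.map (applyAtom V),
            ∃ N, b ∈ (Tstep (stratumProg P σ (j + 1)))^[N] (stratOut P σ j I) := by
          intro b hb
          obtain ⟨a, ha, rfl⟩ := List.mem_map.mp hb
          exact Set.mem_iUnion.mp (show _ ∈ fixpt _ _ from hfix ▸ hposM a ha)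
        obtain ⟨N, hN⟩ := list_common _ (subset_Tstep _) _ _ hl
        have hitM : (Tstep (stratumProg P σ (j + 1)))^[N] (stratOut P σ j I) ⊆ M := by
          refine (iterate_subset_fixpt _ _ N).trans ?_
          rw [← hfix]
          exact stratOut_mono P σ I (hj ▸ h2)
        have hstep : applyAtom V r.head ∈
            Tstep (stratumProg P σ (j + 1))
              ((Tstep (stratumProg P σ (j + 1)))^[N] (stratOut P σ j I)) := by
          refine Or.inr ⟨r, hrQ, V, ?_, ?_, rfl⟩
          · exact fun a ha => hN _ (List.mem_map_of_mem ha)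
          · exact fun a ha hmem => hnegM _ (List.mem_map_of_mem ha) (hitM hmem)
        have : applyAtom V r.head ∈ stratOut P σ (j + 1) I := by
          rw [hfix]
          exact iterate_subset_fixpt _ _ (N + 1) (by
            rw [Function.iterate_succ_apply']; exact hstep)
        exact stratOut_mono P σ I (hj ▸ h2) this
  -- Direction 2: each stratum output is contained in the union of TRed iterates
  have dir2 : ∀ k, stratOut P σ k I ⊆ ⋃ m, (TRed M G)^[m] I := by
    intro k
    induction k with
    | zero => exact Set.subset_iUnion (fun m => (TRed M G)^[m] I) 0
    | succ k ih =>
      show fixpt (stratumProg P σ (k + 1)) (stratOut P σ k I) ⊆ _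
      refine Set.iUnion_subset fun m => ?_
      induction m with
      | zero => exact ih
      | succ m ihm =>
        rw [Function.iterate_succ_apply']
        rintro f (hf | ⟨r, hrQ, V, hpos, hneg, rfl⟩)
        · exact ihm hf
        · have hrP : r ∈ P := hrQ.1
          have hJsub : (Tstep (stratumProg P σ (k + 1)))^[m] (stratOut P σ k I)
              ⊆ stratOut P σ (k + 1) I := iterate_subset_fixpt _ _ m
          have hBJ : stratOut P σ k I
              ⊆ (Tstep (stratumProg P σ (k + 1)))^[m] (stratOut P σ k I) :=
            iter_chain _ (subset_Tstep _) _ (Nat.zero_le m)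
          have hVdom : ∀ v ∈ ruleVars r, V v ∈ adom I ∪ consts P := by
            intro v hv
            obtain ⟨a, ha, hva⟩ : ∃ a ∈ r.pos, v ∈ atomVars a := by
              rcases hv with (hv | hv) | hv
              · exact hsafe r hrP v (Or.inl hv)
              · exact hv
              · exact hsafe r hrP v (Or.inr hv)
            have hfa : applyAtom V a ∈ stratOut P σ (k + 1) I := hJsub (hpos a ha)
            exact adom_stratOut P σ I hsafe (k + 1)
              ⟨applyAtom V a, hfa, List.mem_map_of_mem hva⟩
          have hgG : (⟨applyAtom V r.head, r.pos.map (applyAtom V),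
              r.neg.map (applyAtom V)⟩ : DGroundRule Rel U) ∈ G :=
            ⟨r, hrP, V, hVdom, rfl⟩
          have hnegM : ∀ a ∈ r.neg, applyAtom V a ∉ M := by
            intro a ha hmem
            rcases strata_mem P σ I n _ hmem with hI | ⟨hidb, -, hmem'⟩
            · exact hneg a ha (hBJ (stratOut_mono P σ I (Nat.zero_le k) hI))
            · have hlt : σ a.rel < k + 1 := hrQ.2 ▸ hnegstrat r hrP a ha hidb
              exact hneg a ha (hBJ (stratOut_mono P σ I (Nat.lt_succ_iff.mp hlt) hmem'))
          have hl : ∀ b ∈ r.pos.map (applyAtom V), ∃ N, b ∈ (TRed M G)^[N] I := by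
            intro b hb
            obtain ⟨a, ha, rfl⟩ := List.mem_map.mp hb
            exact Set.mem_iUnion.mp (ihm (hpos a ha))
          obtain ⟨N, hN⟩ := list_common _ hsubTRed _ _ hl
          have hstep : applyAtom V r.head ∈ TRed M G ((TRed M G)^[N] I) := by
            refine Or.inr ⟨⟨applyAtom V r.head, r.pos.map (applyAtom V),
              r.neg.map (applyAtom V)⟩, hgG, ?_, ?_, rfl⟩
            · intro b hb
              obtain ⟨a, ha, rfl⟩ := List.mem_map.mp hb
              exact hnegM a ha
            · exact fun b hb => hN b hb
          exact Set.mem_iUnion.mpr ⟨N + 1, by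
            rw [Function.iterate_succ_apply']; exact hstep⟩
  exact Set.Subset.antisymm (dir2 n) (Set.iUnion_subset dir1)
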